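/- There exists m₀ > 0 such that for every real m ≥ m₀, the integral I(m) = ∫_{−π/16}^{π/16} exp(−m x² + m x⁴) dx satisfies |I(m) − √(π/m)| ≤ 2 m^{−1} √(π/m); that is, I(m) = (1 ± 2m^{−1})·√(π/m). -/

import Mathlib

open MeasureTheory Real Set Filter Topology

lemma tendsto_pow_mul_exp_sq {c : ℝ} (hc : 0 < c) (n : ℕ) :
    Tendsto (fun x : ℝ => x ^ n * Real.exp (-c * x ^ 2)) atTop (𝓝 0) := by
  have h := rpow_mul_exp_neg_mul_sq_isLittleO_exp_neg hc (n : ℝ)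
  have h2 : Tendsto (fun x : ℝ => Real.exp (-(1/2) * x)) atTop (𝓝 0) := by
    apply Real.tendsto_exp_atBot.comp
    have : Tendsto (fun x : ℝ => -(1/2) * x) atTop atBot := by
      simpa using (tendsto_id (α := ℝ)).const_mul_atTop_of_neg (by norm_num : (-(1/2):ℝ) < 0)
    exact this
  have h3 := h.tendsto_zero_of_tendsto h2
  simpa [Real.rpow_natCast] using h3

lemma integrableOn_pow_mul_exp_sq {c : ℝ} (hc : 0 < c) (n : ℕ) :
    IntegrableOn (fun x : ℝ => x ^ n * Real.exp (-c * x ^ 2)) (Ioi 0) := by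
  have h := integrableOn_rpow_mul_exp_neg_mul_sq hc (s := (n : ℝ)) (lt_of_lt_of_le neg_one_lt_zero (Nat.cast_nonneg n))
  simpa [Real.rpow_natCast] using h

lemma integral_Ioi_mul_exp_sq {c : ℝ} (hc : 0 < c) (A : ℝ) :
    ∫ x in Ioi A, x * Real.exp (-c * x ^ 2) = Real.exp (-c * A ^ 2) / (2 * c) := by
  have hd : ∀ x ∈ Ici A, HasDerivAt (fun y : ℝ => -Real.exp (-c * y ^ 2) / (2 * c))
      (x * Real.exp (-c * x ^ 2)) x := by
    intro x _
    have h1 : HasDerivAt (fun y : ℝ => -c * y ^ 2) (-c * (2 * x)) x := by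
      simpa using (hasDerivAt_pow 2 x).const_mul (-c)
    have h2 := (h1.exp.fun_neg).div_const (2 * c)
    refine h2.congr_deriv ?_
    field_simp [hc.ne']
  have hint : IntegrableOn (fun x : ℝ => x * Real.exp (-c * x ^ 2)) (Ioi A) :=
    (integrable_mul_exp_neg_mul_sq hc).integrableOn
  have htend : Tendsto (fun y : ℝ => -Real.exp (-c * y ^ 2) / (2 * c)) atTop (𝓝 0) := by
    have h0 := tendsto_pow_mul_exp_sq hc 0
    have := (h0.neg).div_const (2 * c)
    simpa using this
  rw [integral_Ioi_of_hasDerivAt_of_tendsto' hd hint htend]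
  ring

lemma integral_Ioi_sq_mul_exp_sq {c : ℝ} (hc : 0 < c) :
    ∫ x in Ioi (0:ℝ), x ^ 2 * Real.exp (-c * x ^ 2) = Real.sqrt (π / c) / (4 * c) := by
  have hint2 := integrableOn_pow_mul_exp_sq hc 2
  have hint0 : IntegrableOn (fun x : ℝ => Real.exp (-c * x ^ 2)) (Ioi 0) :=
    (integrable_exp_neg_mul_sq hc).integrableOn
  have key : ∫ x in Ioi (0:ℝ),
      (x ^ 2 * Real.exp (-c * x ^ 2) - 1 / (2 * c) * Real.exp (-c * x ^ 2)) = 0 := by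
    have hd : ∀ x ∈ Ici (0:ℝ), HasDerivAt (fun y : ℝ => -(y / (2 * c)) * Real.exp (-c * y ^ 2))
        (x ^ 2 * Real.exp (-c * x ^ 2) - 1 / (2 * c) * Real.exp (-c * x ^ 2)) x := by
      intro x _
      have h1 : HasDerivAt (fun y : ℝ => -c * y ^ 2) (-c * (2 * x)) x := by
        simpa using (hasDerivAt_pow 2 x).const_mul (-c)
      have hlin : HasDerivAt (fun y : ℝ => -(y / (2 * c))) (-(1 / (2 * c))) x := by
        simpa using ((hasDerivAt_id x).div_const (2 * c)).fun_neg
      have := hlin.mul h1.exp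
      refine this.congr_deriv ?_
      field_simp [hc.ne']
      ring
    have hsub : IntegrableOn (fun x : ℝ =>
        x ^ 2 * Real.exp (-c * x ^ 2) - 1 / (2 * c) * Real.exp (-c * x ^ 2)) (Ioi 0) :=
      hint2.sub (hint0.const_mul _)
    have htend : Tendsto (fun y : ℝ => -(y / (2 * c)) * Real.exp (-c * y ^ 2)) atTop (𝓝 0) := by
      have h1 := tendsto_pow_mul_exp_sq hc 1
      have := (h1.div_const (2 * c)).neg
      simp only [pow_one] at this
      convert this using 2 with y
      · ring
      · simp
    rw [integral_Ioi_of_hasDerivAt_of_tendsto' hd hsub htend]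
    simp
  have hsplit := integral_sub hint2 (hint0.const_mul (1 / (2 * c)))
  have h2 : ∫ x in Ioi (0:ℝ), 1 / (2 * c) * Real.exp (-c * x ^ 2)
      = 1 / (2 * c) * ∫ x in Ioi (0:ℝ), Real.exp (-c * x ^ 2) := integral_const_mul _ _
  have hg := integral_gaussian_Ioi c
  rw [key, h2, hg] at hsplit
  have : ∫ x in Ioi (0:ℝ), x ^ 2 * Real.exp (-c * x ^ 2) = 1 / (2 * c) * (√(π / c) / 2) := by
    linarith
  rw [this]
  ring

lemma integral_Ioi_pow4_mul_exp_sq {c : ℝ} (hc : 0 < c) :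
    ∫ x in Ioi (0:ℝ), x ^ 4 * Real.exp (-c * x ^ 2) = 3 * Real.sqrt (π / c) / (8 * c ^ 2) := by
  have hint4 := integrableOn_pow_mul_exp_sq hc 4
  have hint2 := integrableOn_pow_mul_exp_sq hc 2
  have key : ∫ x in Ioi (0:ℝ),
      (x ^ 4 * Real.exp (-c * x ^ 2) - 3 / (2 * c) * (x ^ 2 * Real.exp (-c * x ^ 2))) = 0 := by
    have hd : ∀ x ∈ Ici (0:ℝ), HasDerivAt (fun y : ℝ => -(y ^ 3 / (2 * c)) * Real.exp (-c * y ^ 2))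
        (x ^ 4 * Real.exp (-c * x ^ 2) - 3 / (2 * c) * (x ^ 2 * Real.exp (-c * x ^ 2))) x := by
      intro x _
      have h1 : HasDerivAt (fun y : ℝ => -c * y ^ 2) (-c * (2 * x)) x := by
        simpa using (hasDerivAt_pow 2 x).const_mul (-c)
      have hlin : HasDerivAt (fun y : ℝ => -(y ^ 3 / (2 * c))) (-(3 * x ^ 2 / (2 * c))) x := by
        have := ((hasDerivAt_pow 3 x).div_const (2 * c)).fun_neg
        simpa using this
      have := hlin.mul h1.exp
      refine this.congr_deriv ?_
      field_simp [hc.ne']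
      ring
    have hsub : IntegrableOn (fun x : ℝ =>
        x ^ 4 * Real.exp (-c * x ^ 2) - 3 / (2 * c) * (x ^ 2 * Real.exp (-c * x ^ 2))) (Ioi 0) :=
      hint4.sub (hint2.const_mul _)
    have htend : Tendsto (fun y : ℝ => -(y ^ 3 / (2 * c)) * Real.exp (-c * y ^ 2)) atTop (𝓝 0) := by
      have h3 := tendsto_pow_mul_exp_sq hc 3
      have := (h3.div_const (2 * c)).neg
      convert this using 2 with y
      · ring
      · simp
    rw [integral_Ioi_of_hasDerivAt_of_tendsto' hd hsub htend]
    simp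
  have hsplit := integral_sub hint4 (hint2.const_mul (3 / (2 * c)))
  have h2 : ∫ x in Ioi (0:ℝ), 3 / (2 * c) * (x ^ 2 * Real.exp (-c * x ^ 2))
      = 3 / (2 * c) * ∫ x in Ioi (0:ℝ), x ^ 2 * Real.exp (-c * x ^ 2) := integral_const_mul _ _
  rw [key, h2, integral_Ioi_sq_mul_exp_sq hc] at hsplit
  have : ∫ x in Ioi (0:ℝ), x ^ 4 * Real.exp (-c * x ^ 2)
      = 3 / (2 * c) * (√(π / c) / (4 * c)) := by linarith
  rw [this]
  field_simp
  ring

lemma interval_even_eq {f : ℝ → ℝ} (hf : ∀ x, f (-x) = f x) (hc : Continuous f) (a : ℝ) :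
    ∫ x in (-a)..a, f x = 2 * ∫ x in (0:ℝ)..a, f x := by
  have h1 : ∫ x in (-a)..(0:ℝ), f x = ∫ x in (0:ℝ)..a, f x := by
    have := intervalIntegral.integral_comp_neg (a := (0:ℝ)) (b := a) f
    simp only [neg_zero] at this
    rw [← this]
    simp [hf]
  have h2 := intervalIntegral.integral_add_adjacent_intervals
    (a := -a) (b := 0) (c := a) (f := f) (μ := volume)
    (hc.intervalIntegrable _ _) (hc.intervalIntegrable _ _)
  rw [← h2, h1]
  ring

lemma integral_Ioc_split {f : ℝ → ℝ} (hint : IntegrableOn f (Ioi (0:ℝ))) {a : ℝ} (ha : 0 ≤ a) :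
    ∫ x in Ioc (0:ℝ) a, f x = (∫ x in Ioi (0:ℝ), f x) - ∫ x in Ioi a, f x := by
  have hu : Ioc (0:ℝ) a ∪ Ioi a = Ioi 0 := Ioc_union_Ioi_eq_Ioi ha
  have h1 : IntegrableOn f (Ioc (0:ℝ) a) := hint.mono_set Ioc_subset_Ioi_self
  have h2 : IntegrableOn f (Ioi a) := hint.mono_set (Ioi_subset_Ioi ha)
  rw [← hu, setIntegral_union (Ioc_disjoint_Ioi le_rfl) measurableSet_Ioi h1 h2]
  ring

lemma exp_le_one_add_mul {t : ℝ} (ht : 0 ≤ t) : Real.exp t ≤ 1 + t * Real.exp t := by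
  have h1 : Real.exp (-t) * Real.exp t = 1 := by rw [← Real.exp_add]; simp
  nlinarith [Real.add_one_le_exp (-t), Real.exp_pos t]

lemma arith_lower {m a : ℝ} (hm : 1600 ≤ m) (ha1 : 0.196 ≤ a) (ha2 : a ≤ 1) :
    a⁻¹ * (Real.exp (-(m * a ^ 2)) / m) ≤ 2 * m⁻¹ * Real.sqrt (π / m) := by
  have hm0 : (0:ℝ) < m := by linarith
  have ha0 : (0:ℝ) < a := by linarith
  have hsm2 : Real.sqrt m ^ 2 = m := Real.sq_sqrt hm0.le
  have hsm0 : (0:ℝ) < Real.sqrt m := Real.sqrt_pos.mpr hm0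
  have hsm : (40:ℝ) ≤ Real.sqrt m := by nlinarith [Real.sqrt_nonneg m]
  have hsp : (1.77:ℝ) ≤ Real.sqrt π := by
    nlinarith [Real.sq_sqrt Real.pi_pos.le, Real.sqrt_nonneg π, Real.pi_gt_d6]
  have hexp : Real.exp (-(m * a ^ 2)) ≤ (m * a ^ 2)⁻¹ := by
    rw [Real.exp_neg]
    have h2 : m * a ^ 2 ≤ Real.exp (m * a ^ 2) := by
      nlinarith [Real.add_one_le_exp (m * a ^ 2)]
    have h3 : (0:ℝ) < m * a ^ 2 := by positivity
    exact inv_anti₀ h3 h2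
  have step1 : a⁻¹ * (Real.exp (-(m * a ^ 2)) / m) ≤ a⁻¹ * ((m * a ^ 2)⁻¹ / m) := by gcongr
  refine step1.trans ?_
  have e1 : a⁻¹ * ((m * a ^ 2)⁻¹ / m) = 1 / (a ^ 3 * m ^ 2) := by
    field_simp
  have e2 : 2 * m⁻¹ * Real.sqrt (π / m) = 2 * Real.sqrt π / (m * Real.sqrt m) := by
    rw [Real.sqrt_div Real.pi_pos.le]
    field_simp
  rw [e1, e2, div_le_div_iff₀ (by positivity) (by positivity)]
  -- ⊢ 1 * (m * √m) ≤ 2 * √π * (a ^ 3 * m ^ 2)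
  have h4 : (0.0075:ℝ) ≤ a ^ 3 := by nlinarith
  have h5 : (0.0132:ℝ) ≤ a ^ 3 * Real.sqrt π := by
    nlinarith [mul_le_mul h4 hsp (by norm_num) (by positivity : (0:ℝ) ≤ a ^ 3)]
  have h6 : Real.sqrt m ≤ 0.0264 * m := by nlinarith
  nlinarith [mul_le_mul h6 (le_refl m) hm0.le (by positivity : (0:ℝ) ≤ 0.0264 * m),
    mul_le_mul h5 (le_refl (m ^ 2)) (by positivity) (by positivity : (0:ℝ) ≤ a ^ 3 * Real.sqrt π)]

lemma arith_upper {m b : ℝ} (hm : 1600 ≤ m) (hb1 : 0.96 ≤ b) (hb2 : b ≤ 1) :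
    m * (3 * Real.sqrt (π / (m * b)) / (4 * (m * b) ^ 2)) ≤ 2 * m⁻¹ * Real.sqrt (π / m) := by
  have hm0 : (0:ℝ) < m := by linarith
  have hb0 : (0:ℝ) < b := by linarith
  have hsm2 : Real.sqrt m ^ 2 = m := Real.sq_sqrt hm0.le
  have hsb2 : Real.sqrt b ^ 2 = b := Real.sq_sqrt hb0.le
  have hsm0 : (0:ℝ) < Real.sqrt m := Real.sqrt_pos.mpr hm0
  have hsb0 : (0:ℝ) < Real.sqrt b := Real.sqrt_pos.mpr hb0
  have hsb : (0.9:ℝ) ≤ Real.sqrt b := by nlinarith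
  have hsp0 : (0:ℝ) < Real.sqrt π := Real.sqrt_pos.mpr Real.pi_pos
  have e1 : m * (3 * Real.sqrt (π / (m * b)) / (4 * (m * b) ^ 2)) =
      3 * Real.sqrt π / (4 * Real.sqrt b * b ^ 2 * m * Real.sqrt m) := by
    rw [Real.sqrt_div Real.pi_pos.le, Real.sqrt_mul hm0.le]
    field_simp
  have e2 : 2 * m⁻¹ * Real.sqrt (π / m) = 2 * Real.sqrt π / (m * Real.sqrt m) := by
    rw [Real.sqrt_div Real.pi_pos.le]
    field_simp
  rw [e1, e2, div_le_div_iff₀ (by positivity) (by positivity)]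
  -- ⊢ 3 * √π * (m * √m) ≤ 2 * √π * (4 * √b * b ^ 2 * m * √m)
  have key : (3:ℝ) ≤ 8 * (Real.sqrt b * b ^ 2) := by nlinarith
  have hA : (0:ℝ) < Real.sqrt π * (m * Real.sqrt m) := by positivity
  nlinarith [mul_le_mul key (le_refl (Real.sqrt π * (m * Real.sqrt m))) hA.le
    (by positivity : (0:ℝ) ≤ 8 * (Real.sqrt b * b ^ 2))]

theorem gaussian_like_integral_estimate :
    ∃ m₀ : ℝ, 0 < m₀ ∧ ∀ m : ℝ, m₀ ≤ m →
      |(∫ x in (-(Real.pi / 16))..(Real.pi / 16),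
          Real.exp (-m * x ^ 2 + m * x ^ 4)) - Real.sqrt (Real.pi / m)| ≤
        2 * m⁻¹ * Real.sqrt (Real.pi / m) := by
  refine ⟨1600, by norm_num, fun m hm => ?_⟩
  have hm0 : (0:ℝ) < m := by linarith
  set a : ℝ := π / 16 with ha_def
  have hπl : 3.1415 ≤ π := by linarith [Real.pi_gt_d6]
  have hπu : π ≤ 3.1416 := by linarith [Real.pi_lt_d6]
  have ha1 : 0.196 ≤ a := by rw [ha_def]; linarith
  have ha2 : a ≤ 0.1964 := by rw [ha_def]; linarith
  have ha0 : (0:ℝ) < a := by linarith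
  have hb1 : (0.96:ℝ) ≤ 1 - a ^ 2 := by nlinarith
  have hb2 : 1 - a ^ 2 ≤ 1 := by nlinarith
  set c : ℝ := m * (1 - a ^ 2) with hc_def
  clear_value c
  have hc0 : 0 < c := by rw [hc_def]; nlinarith
  -- continuity
  have hf : Continuous fun x : ℝ => Real.exp (-m * x ^ 2 + m * x ^ 4) :=
    ((continuous_const.mul (continuous_pow 2)).add (continuous_const.mul (continuous_pow 4))).rexp
  have hg : Continuous fun x : ℝ => Real.exp (-m * x ^ 2) :=
    (continuous_const.mul (continuous_pow 2)).rexp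
  have hh : Continuous fun x : ℝ => x ^ 4 * Real.exp (-c * x ^ 2) :=
    (continuous_pow 4).mul (continuous_const.mul (continuous_pow 2)).rexp
  -- pointwise bounds on [-a, a]
  have hlow : ∀ x ∈ Icc (-a) a, Real.exp (-m * x ^ 2) ≤ Real.exp (-m * x ^ 2 + m * x ^ 4) := by
    intro x _
    apply Real.exp_le_exp.mpr
    nlinarith [pow_le_pow_left₀ (abs_nonneg x) (le_refl |x|) 4, sq_nonneg (x ^ 2)]
  have hup : ∀ x ∈ Icc (-a) a,
      Real.exp (-m * x ^ 2 + m * x ^ 4)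
        ≤ Real.exp (-m * x ^ 2) + m * (x ^ 4 * Real.exp (-c * x ^ 2)) := by
    intro x hx
    have hx2 : x ^ 2 ≤ a ^ 2 := sq_le_sq' hx.1 hx.2
    have ht0 : (0:ℝ) ≤ m * x ^ 4 := by positivity
    have h2 := exp_le_one_add_mul ht0
    have h3 : m * x ^ 4 ≤ m * a ^ 2 * x ^ 2 := by
      nlinarith [mul_le_mul_of_nonneg_left hx2 (mul_nonneg hm0.le (sq_nonneg x))]
    have h4 : Real.exp (m * x ^ 4) ≤ Real.exp (m * a ^ 2 * x ^ 2) := Real.exp_le_exp.mpr h3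
    have h5 : Real.exp (-m * x ^ 2) * Real.exp (m * a ^ 2 * x ^ 2) = Real.exp (-c * x ^ 2) := by
      rw [← Real.exp_add, hc_def]; congr 1; ring
    calc Real.exp (-m * x ^ 2 + m * x ^ 4)
        = Real.exp (-m * x ^ 2) * Real.exp (m * x ^ 4) := by rw [← Real.exp_add]
      _ ≤ Real.exp (-m * x ^ 2) * (1 + m * x ^ 4 * Real.exp (m * x ^ 4)) :=
          mul_le_mul_of_nonneg_left h2 (Real.exp_pos _).le
      _ = Real.exp (-m * x ^ 2) + m * x ^ 4 * (Real.exp (-m * x ^ 2) * Real.exp (m * x ^ 4)) := by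
          ring
      _ ≤ Real.exp (-m * x ^ 2)
            + m * x ^ 4 * (Real.exp (-m * x ^ 2) * Real.exp (m * a ^ 2 * x ^ 2)) := by
          gcongr
      _ = Real.exp (-m * x ^ 2) + m * (x ^ 4 * Real.exp (-c * x ^ 2)) := by rw [h5]; ring
  -- integral comparisons
  have hIJlow : (∫ x in (-a)..a, Real.exp (-m * x ^ 2))
      ≤ ∫ x in (-a)..a, Real.exp (-m * x ^ 2 + m * x ^ 4) :=
    intervalIntegral.integral_mono_on (by linarith) (hg.intervalIntegrable _ _)
      (hf.intervalIntegrable _ _) hlow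
  have hIJup : (∫ x in (-a)..a, Real.exp (-m * x ^ 2 + m * x ^ 4))
      ≤ (∫ x in (-a)..a, Real.exp (-m * x ^ 2))
        + m * ∫ x in (-a)..a, x ^ 4 * Real.exp (-c * x ^ 2) := by
    have h := intervalIntegral.integral_mono_on (μ := volume) (a := -a) (b := a) (by linarith : -a ≤ a)
      (hf.intervalIntegrable _ _) ((hg.fun_add (continuous_const.fun_mul hh)).intervalIntegrable _ _) hup
    rwa [intervalIntegral.integral_add (hg.intervalIntegrable _ _)
      ((continuous_const.fun_mul hh).intervalIntegrable _ _), intervalIntegral.integral_const_mul] at h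
  -- Gaussian piece
  have hgint : IntegrableOn (fun x : ℝ => Real.exp (-m * x ^ 2)) (Ioi 0) :=
    (integrable_exp_neg_mul_sq hm0).integrableOn
  have hgeven : ∀ x : ℝ, Real.exp (-m * (-x) ^ 2) = Real.exp (-m * x ^ 2) := fun x => by
    rw [show -m * (-x) ^ 2 = -m * x ^ 2 by ring]
  have hJeq : (∫ x in (-a)..a, Real.exp (-m * x ^ 2))
      = 2 * ((∫ x in Ioi (0:ℝ), Real.exp (-m * x ^ 2))
          - ∫ x in Ioi a, Real.exp (-m * x ^ 2)) := by
    rw [interval_even_eq hgeven hg a, intervalIntegral.integral_of_le ha0.le,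
      integral_Ioc_split hgint ha0.le]
  have hGauss : (∫ x in Ioi (0:ℝ), Real.exp (-m * x ^ 2)) = Real.sqrt (π / m) / 2 :=
    integral_gaussian_Ioi m
  have hTail0 : 0 ≤ ∫ x in Ioi a, Real.exp (-m * x ^ 2) :=
    setIntegral_nonneg measurableSet_Ioi fun x _ => (Real.exp_pos _).le
  have hTail : (∫ x in Ioi a, Real.exp (-m * x ^ 2))
      ≤ a⁻¹ * (Real.exp (-(m * a ^ 2)) / (2 * m)) := by
    have hmono : (∫ x in Ioi a, Real.exp (-m * x ^ 2))
        ≤ ∫ x in Ioi a, a⁻¹ * (x * Real.exp (-m * x ^ 2)) := by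
      apply setIntegral_mono_on (hgint.mono_set (Ioi_subset_Ioi ha0.le))
        (((integrable_mul_exp_neg_mul_sq hm0).const_mul a⁻¹).integrableOn)
        measurableSet_Ioi
      intro x hx
      have hx' : a < x := hx
      have h1 : (1:ℝ) ≤ a⁻¹ * x := by
        rw [le_inv_mul_iff₀ ha0]; linarith
      nlinarith [Real.exp_pos (-m * x ^ 2)]
    rw [integral_const_mul, integral_Ioi_mul_exp_sq hm0 a] at hmono
    convert hmono using 4
    ring
  -- fourth-moment piece
  have hhint : IntegrableOn (fun x : ℝ => x ^ 4 * Real.exp (-c * x ^ 2)) (Ioi 0) :=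
    integrableOn_pow_mul_exp_sq hc0 4
  have hheven : ∀ x : ℝ, (-x) ^ 4 * Real.exp (-c * (-x) ^ 2) = x ^ 4 * Real.exp (-c * x ^ 2) :=
    fun x => by rw [show (-x) ^ 4 = x ^ 4 by ring, show -c * (-x) ^ 2 = -c * x ^ 2 by ring]
  have hKeq : (∫ x in (-a)..a, x ^ 4 * Real.exp (-c * x ^ 2))
      = 2 * ∫ x in Ioc (0:ℝ) a, x ^ 4 * Real.exp (-c * x ^ 2) := by
    rw [interval_even_eq hheven hh a, intervalIntegral.integral_of_le ha0.le]
  have hKle : (∫ x in Ioc (0:ℝ) a, x ^ 4 * Real.exp (-c * x ^ 2))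
      ≤ ∫ x in Ioi (0:ℝ), x ^ 4 * Real.exp (-c * x ^ 2) :=
    setIntegral_mono_set hhint (Eventually.of_forall fun x => by positivity)
      (HasSubset.Subset.eventuallyLE Ioc_subset_Ioi_self)
  have hK : (∫ x in (-a)..a, x ^ 4 * Real.exp (-c * x ^ 2))
      ≤ 3 * Real.sqrt (π / c) / (4 * c ^ 2) := by
    have h4 := integral_Ioi_pow4_mul_exp_sq hc0
    rw [hKeq]
    rw [h4] at hKle
    have he : 2 * (3 * Real.sqrt (π / c) / (8 * c ^ 2)) = 3 * Real.sqrt (π / c) / (4 * c ^ 2) := by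
      ring
    linarith
  -- conclude
  rw [abs_le]
  constructor
  · have hlow2 := arith_lower hm ha1 (by linarith : a ≤ 1)
    have h2T : a⁻¹ * (Real.exp (-(m * a ^ 2)) / (2 * m)) * 2
        = a⁻¹ * (Real.exp (-(m * a ^ 2)) / m) := by ring
    have hJlow : Real.sqrt (π / m) - a⁻¹ * (Real.exp (-(m * a ^ 2)) / m)
        ≤ ∫ x in (-a)..a, Real.exp (-m * x ^ 2) := by
      rw [hJeq, hGauss]
      nlinarith [hTail]
    linarith
  · have hup2 := arith_upper hm hb1 hb2
    have hcc : m * (1 - a ^ 2) = c := hc_def.symm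
    rw [hcc] at hup2
    have hJup : (∫ x in (-a)..a, Real.exp (-m * x ^ 2)) ≤ Real.sqrt (π / m) := by
      rw [hJeq, hGauss]; linarith
    have hmK : m * (∫ x in (-a)..a, x ^ 4 * Real.exp (-c * x ^ 2))
        ≤ m * (3 * Real.sqrt (π / c) / (4 * c ^ 2)) :=
      mul_le_mul_of_nonneg_left hK hm0.le
    linarith
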